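/- For every k ∈ ℕ, every LE-condition (d,s,φ) ∈ Q_k, and every m ∈ ℕ, there exist d′ and s′ such that (d′,s′,φ) ∈ Q_k, (d′,s′,φ) ≤ (d,s,φ) in the extension order, and d′(n) = 1 for some n > m. -/

import Mathlib

open scoped Classical

/-- An LE-condition for the poset `LE_b`: a triple `(d, s, φ)` where `d` is a finite
binary sequence, `s n < b n` for `n < |d|`, `φ n ⊆ {0,…,b n − 1}`, and for some `k`,
`|φ n| ≤ b n · 2^{−n/2^k}` for all `n ≥ |d|`. -/
structure LECond (b : ℕ → ℕ) where
  d : List Bool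
  s : ℕ → ℕ
  φ : ℕ → Finset ℕ
  s_lt : ∀ n < d.length, s n < b n
  φ_sub : ∀ n, φ n ⊆ Finset.range (b n)
  bound : ∃ k : ℕ, ∀ n, d.length ≤ n →
    ((φ n).card : ℝ) ≤ (b n : ℝ) * (2 : ℝ) ^ (-(n : ℝ) / (2 : ℝ) ^ k)

/-- Membership in `Q_k`: the witness `k` works. -/
def LECond.inQ {b : ℕ → ℕ} (p : LECond b) (k : ℕ) : Prop :=
  ∀ n, p.d.length ≤ n →
    ((p.φ n).card : ℝ) ≤ (b n : ℝ) * (2 : ℝ) ^ (-(n : ℝ) / (2 : ℝ) ^ k)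

/-- Membership in `Q_{d,s,k}`: in `Q_k` with first two coordinates `d`, `s`. -/
def LECond.inQds {b : ℕ → ℕ} (p : LECond b) (d : List Bool) (s : ℕ → ℕ) (k : ℕ) : Prop :=
  p.d = d ∧ (∀ n < d.length, p.s n = s n) ∧ p.inQ k

/-- The extension order on LE-conditions: `q ≤ p`. -/
def LECond.le {b : ℕ → ℕ} (q p : LECond b) : Prop :=
  p.d <+: q.d ∧ (∀ n < p.d.length, q.s n = p.s n) ∧ (∀ n, p.φ n ⊆ q.φ n) ∧
  ∀ n, q.d.getD n false = true → ¬ (p.d.getD n false = true) → q.s n ∉ p.φ n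

/-- `d` is long for `k`: `|d| ≥ 2` and `2^{−n/2^k} ≤ 1/(n²(n+1)²)` for all `n ≥ |d|`. -/
def LongFor (k : ℕ) (d : List Bool) : Prop :=
  2 ≤ d.length ∧ ∀ n : ℕ, d.length ≤ n →
    (2 : ℝ) ^ (-(n : ℝ) / (2 : ℝ) ^ k) ≤ 1 / ((n : ℝ) ^ 2 * ((n : ℝ) + 1) ^ 2)

/-- Any condition in `Q_k` can be extended, within `Q_k` and keeping `φ`, so that the
new binary sequence takes the value `1` at some `n > m`. -/
theorem stmt5 (b : ℕ → ℕ) (hb : ∀ n, 2 ^ n ≤ b n)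
    (k : ℕ) (p : LECond b) (hp : p.inQ k) (m : ℕ) :
    ∃ q : LECond b, q.φ = p.φ ∧ q.inQ k ∧ q.le p ∧
      ∃ n : ℕ, m < n ∧ q.d.getD n false = true := by
  classical
  set L := p.d.length with hL
  set n₀ := max (m + 1) L with hn0
  have hLn : L ≤ n₀ := le_max_right _ _
  have hmn : m < n₀ := lt_of_lt_of_le (Nat.lt_succ_self m) (le_max_left _ _)
  have hbpos : ∀ n, 0 < b n := fun n => lt_of_lt_of_le (Nat.two_pow_pos n) (hb n)
  -- the set of available values at n₀ is nonempty
  have hcard : (p.φ n₀).card < b n₀ := by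
    have h1 := hp n₀ hLn
    have h2 : (2 : ℝ) ^ (-(n₀ : ℝ) / (2 : ℝ) ^ k) < 1 := by
      apply Real.rpow_lt_one_of_one_lt_of_neg one_lt_two
      have hn : (0 : ℝ) < (n₀ : ℝ) := by exact_mod_cast Nat.lt_of_lt_of_le (Nat.succ_pos m) (le_max_left _ _)
      have hk : (0 : ℝ) < (2 : ℝ) ^ k := by positivity
      exact div_neg_of_neg_of_pos (neg_neg_of_pos hn) hk
    have hbr : (0 : ℝ) < (b n₀ : ℝ) := by exact_mod_cast hbpos n₀
    have : ((p.φ n₀).card : ℝ) < (b n₀ : ℝ) := by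
      calc ((p.φ n₀).card : ℝ) ≤ (b n₀ : ℝ) * (2 : ℝ) ^ (-(n₀ : ℝ) / (2 : ℝ) ^ k) := h1
        _ < (b n₀ : ℝ) * 1 := by exact mul_lt_mul_of_pos_left h2 hbr
        _ = (b n₀ : ℝ) := mul_one _
    exact_mod_cast this
  have hne : (Finset.range (b n₀) \ p.φ n₀).Nonempty := by
    rw [← Finset.card_pos, Finset.card_sdiff_of_subset (p.φ_sub n₀), Finset.card_range]
    omega
  -- data of the extension
  set s' : ℕ → ℕ := fun n => if n < L then p.s n
    else if h : (Finset.range (b n) \ p.φ n).Nonempty then h.choose else 0 with hs'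
  set d' : List Bool := p.d ++ (List.replicate (n₀ - L) false ++ [true]) with hd'
  have hlen : d'.length = n₀ + 1 := by
    simp [hd', ← hL]
    omega
  have hs'mem : ∀ n, L ≤ n → (Finset.range (b n) \ p.φ n).Nonempty →
      s' n ∈ Finset.range (b n) \ p.φ n := by
    intro n h1 h2
    simp only [hs', if_neg (not_lt.mpr h1), dif_pos h2]
    exact h2.choose_spec
  have hslt : ∀ n < d'.length, s' n < b n := by
    intro n hn
    by_cases h : n < L
    · simpa [hs', if_pos h] using p.s_lt n h
    · simp only [hs', if_neg h]
      split
      · rename_i h2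
        have := h2.choose_spec
        rw [Finset.mem_sdiff, Finset.mem_range] at this
        exact this.1
      · exact hbpos n
  -- getD description
  have hgetD : ∀ n, d'.getD n false =
      if h : n < L then p.d.getD n false else decide (n = n₀) := by
    intro n
    by_cases h : n < L
    · rw [dif_pos h, hd', List.getD_append _ _ _ _ h]
    · rw [dif_neg h]
      push_neg at h
      rw [hd', List.getD_append_right _ _ _ _ h]
      by_cases h2 : n - L < n₀ - L
      · have : n < n₀ := by omega
        rw [List.getD_append _ _ _ _ (by simpa using h2),
          List.getD_eq_getElem _ _ (by simpa using h2)]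
        simp [Nat.ne_of_lt this]
      · rw [List.getD_append_right _ _ _ _ (by simpa using not_lt.mp h2)]
        simp only [List.length_replicate]
        by_cases h3 : n = n₀
        · subst h3
          have : n₀ - L - (n₀ - L) = 0 := by omega
          simp [← hL, this]
        · have : 1 ≤ n - L - (n₀ - L) := by omega
          rw [List.getD_eq_default _ _ (by simpa using this)]
          simp [h3]
  refine ⟨⟨d', s', p.φ, hslt, p.φ_sub, ⟨k, ?_⟩⟩, rfl, ?_, ⟨⟨_, rfl⟩, ?_, fun n => le_refl _, ?_⟩, n₀, hmn, ?_⟩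
  · intro n hn
    exact hp n (le_trans hLn (by rw [hlen] at hn; omega))
  · intro n hn
    exact hp n (le_trans hLn (by rw [hlen] at hn; omega))
  · intro n hn
    simp [hs', if_pos hn, hL, not_le.mpr hn]
  · intro n hq hpn
    have := hgetD n
    by_cases h : n < L
    · rw [dif_pos h] at this
      exact absurd (this ▸ hq) hpn
    · rw [dif_neg h] at this
      have hn0' : n = n₀ := by
        by_contra h2
        simp [h2] at this
        simp [this] at hq
      subst hn0'
      have := hs'mem n₀ hLn hne
      rw [Finset.mem_sdiff] at this
      exact this.2
  · rw [hgetD n₀, dif_neg (not_lt.mpr hLn)]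
    simp
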